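/- For every d ≥ 1, every multi-index α ∈ ℕ^d and all X ≥ 0, one has V_α(X) ≥ 2^d e^{−X/2}; moreover V_α(0) = 2^d. -/

import Mathlib

open MeasureTheory

noncomputable section

/-- The `n`-th Laguerre polynomial `L_n(x) = Σ_{k=0}^n (n choose k) (−x)^k / k!`. -/
def laguerreFun (n : ℕ) (x : ℝ) : ℝ :=
  ∑ k ∈ Finset.range (n + 1), (n.choose k : ℝ) * (-x) ^ k / (k.factorial : ℝ)

/-- `T_n(X) = Σ_{k=0}^{n−1} (−1)^k L_k(X) + ((−1)^n/2) L_n(X)`. -/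
def Tfun (n : ℕ) (X : ℝ) : ℝ :=
  (∑ k ∈ Finset.range n, (-1 : ℝ) ^ k * laguerreFun k X) +
    (-1 : ℝ) ^ n / 2 * laguerreFun n X

/-- `V_α(X) = 4 e^{−X/2} Σ_{k=0}^{d−1} C(d−1,k) T_{|α|+k}(X)`. -/
def Vfun (d : ℕ) (α : Fin d → ℕ) (X : ℝ) : ℝ :=
  4 * Real.exp (-X / 2) *
    ∑ k ∈ Finset.range d, ((d - 1).choose k : ℝ) * Tfun ((∑ j, α j) + k) X

open Finset

namespace VLB

lemma laguerre_zero (n : ℕ) : laguerreFun n 0 = 1 := by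
  unfold laguerreFun
  rw [Finset.sum_eq_single 0]
  · simp
  · intro k hk hk0
    simp [zero_pow hk0]
  · simp

/-- derivative target for `laguerreFun n`. -/
def dL (n : ℕ) (x : ℝ) : ℝ := -∑ j ∈ Finset.range n, laguerreFun j x

lemma dL_succ (n : ℕ) (x : ℝ) : dL (n+1) x = dL n x - laguerreFun n x := by
  unfold dL; rw [Finset.sum_range_succ]; ring

lemma key1 (n : ℕ) (x : ℝ) :
    ∑ i ∈ Finset.range n, (n.choose (i+1) : ℝ) * (-x) ^ i / (i.factorial : ℝ)
      = ∑ j ∈ Finset.range n, laguerreFun j x := by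
  induction n with
  | zero => simp
  | succ n ih =>
    have pascal : ∀ i : ℕ, ((n+1).choose (i+1) : ℝ) = (n.choose i : ℝ) + (n.choose (i+1) : ℝ) := by
      intro i
      rw [Nat.choose_succ_succ]
      push_cast; ring
    have h1 : ∑ i ∈ Finset.range (n+1), ((n+1).choose (i+1) : ℝ) * (-x) ^ i / (i.factorial : ℝ)
        = (∑ i ∈ Finset.range (n+1), (n.choose i : ℝ) * (-x) ^ i / (i.factorial : ℝ))
          + ∑ i ∈ Finset.range (n+1), (n.choose (i+1) : ℝ) * (-x) ^ i / (i.factorial : ℝ) := by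
      rw [← Finset.sum_add_distrib]
      apply Finset.sum_congr rfl
      intro i _
      rw [pascal i]; ring
    have h2 : ∑ i ∈ Finset.range (n+1), (n.choose (i+1) : ℝ) * (-x) ^ i / (i.factorial : ℝ)
        = ∑ i ∈ Finset.range n, (n.choose (i+1) : ℝ) * (-x) ^ i / (i.factorial : ℝ) := by
      rw [Finset.sum_range_succ, Nat.choose_succ_self]
      simp
    rw [h1, h2, ih]
    conv_rhs => rw [Finset.sum_range_succ]
    have : ∑ i ∈ Finset.range (n+1), (n.choose i : ℝ) * (-x) ^ i / (i.factorial : ℝ) = laguerreFun n x := rfl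
    rw [this]
    ring

lemma hasDerivAt_laguerre (n : ℕ) (x : ℝ) :
    HasDerivAt (laguerreFun n) (dL n x) x := by
  have h : HasDerivAt (laguerreFun n)
      (∑ k ∈ Finset.range (n+1), (n.choose k : ℝ) * ((k : ℝ) * (-x) ^ (k-1) * (-1)) / (k.factorial : ℝ)) x := by
    unfold laguerreFun
    apply HasDerivAt.fun_sum
    intro k _
    have hx : HasDerivAt (fun x : ℝ => (-x) ^ k) ((k : ℝ) * (-x) ^ (k-1) * (-1)) x := by
      have h1 : HasDerivAt (fun x : ℝ => -x) (-1) x := (hasDerivAt_id x).neg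
      exact (hasDerivAt_pow k (-x)).comp x h1
    simpa [div_eq_mul_inv, mul_comm, mul_assoc, mul_left_comm] using (hx.const_mul ((n.choose k : ℝ))).mul_const ((k.factorial : ℝ))⁻¹
  convert h using 1
  rw [Finset.sum_range_succ' (fun k => (n.choose k : ℝ) * ((k : ℝ) * (-x) ^ (k-1) * (-1)) / (k.factorial : ℝ)) n]
  simp only [Nat.cast_zero, zero_mul, mul_zero, zero_div, add_zero, Nat.cast_succ]
  unfold dL
  rw [← key1 n x, ← Finset.sum_neg_distrib]
  apply Finset.sum_congr rfl
  intro i _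
  have : ((i+1).factorial : ℝ) = ((i+1 : ℕ) : ℝ) * (i.factorial : ℝ) := by
    rw [Nat.factorial_succ]; push_cast; ring
  rw [this]
  have h0 : ((i : ℝ) + 1) ≠ 0 := by positivity
  simp only [Nat.add_sub_cancel]
  field_simp
  push_cast; ring

end VLB

namespace VLB

lemma Tfun_zero (n : ℕ) : Tfun n 0 = 1/2 := by
  unfold Tfun
  simp only [laguerre_zero, mul_one]
  rw [neg_one_geom_sum]
  rcases Nat.even_or_odd n with h | h
  · rw [if_pos h, h.neg_one_pow]; norm_num
  · rw [if_neg (Nat.not_even_iff_odd.mpr h), h.neg_one_pow]; norm_num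

def Sn (n : ℕ) (x : ℝ) : ℝ := ∑ k ∈ Finset.range n, (-1 : ℝ) ^ k * laguerreFun k x

lemma hasDerivAt_Tfun (n : ℕ) (x : ℝ) :
    HasDerivAt (Tfun n) ((1/2) * Sn n x) x := by
  have h : HasDerivAt (Tfun n)
      ((∑ k ∈ Finset.range n, (-1:ℝ)^k * dL k x) + (-1:ℝ)^n/2 * dL n x) x := by
    unfold Tfun
    apply HasDerivAt.add
    · apply HasDerivAt.fun_sum
      intro k _
      exact (hasDerivAt_laguerre k x).const_mul _
    · exact (hasDerivAt_laguerre n x).const_mul _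
  convert h using 1
  clear h
  induction n with
  | zero => simp [Sn, dL]
  | succ n ih =>
    rw [Finset.sum_range_succ, dL_succ]
    have hs : Sn (n+1) x = Sn n x + (-1:ℝ)^n * laguerreFun n x := by
      unfold Sn; rw [Finset.sum_range_succ]
    rw [hs]
    rw [mul_add, ih]
    rw [pow_succ]
    ring

lemma Tfun_ge_of_Sn_nonneg (n : ℕ) (hS : ∀ x : ℝ, 0 ≤ x → 0 ≤ Sn n x) :
    ∀ X : ℝ, 0 ≤ X → 1/2 ≤ Tfun n X := by
  intro X hX
  have hmono : MonotoneOn (Tfun n) (Set.Ici (0:ℝ)) := by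
    apply monotoneOn_of_deriv_nonneg (convex_Ici 0)
    · exact fun y _ => ((hasDerivAt_Tfun n y).continuousAt).continuousWithinAt
    · intro y hy
      exact ((hasDerivAt_Tfun n y).differentiableAt).differentiableWithinAt
    · intro y hy
      rw [(hasDerivAt_Tfun n y).deriv]
      rw [interior_Ici] at hy
      have := hS y (le_of_lt hy)
      linarith
  have := hmono (Set.self_mem_Ici) (Set.mem_Ici.mpr hX) hX
  rw [Tfun_zero] at this
  exact this

end VLB

namespace VLB

/-- Probabilists' Hermite polynomials as functions. -/
def He : ℕ → ℝ → ℝ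
  | 0, _ => 1
  | 1, y => y
  | (n+2), y => y * He (n+1) y - (n+1 : ℕ) * He n y

lemma He_zero (y : ℝ) : He 0 y = 1 := rfl
lemma He_one (y : ℝ) : He 1 y = y := rfl
lemma He_succ_succ (n : ℕ) (y : ℝ) :
    He (n+2) y = y * He (n+1) y - (n+1 : ℕ) * He n y := rfl

/-- uniform recurrence with ℕ-subtraction. -/
lemma He_rec (n : ℕ) (y : ℝ) :
    He (n+1) y = y * He n y - (n : ℕ) * He (n-1) y := by
  match n with
  | 0 => simp [He_one, He_zero]
  | (m+1) => exact He_succ_succ m y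

lemma hasDerivAt_He (n : ℕ) (y : ℝ) :
    HasDerivAt (He n) ((n : ℕ) * He (n-1) y) y := by
  induction n using Nat.strong_induction_on with
  | _ n ih =>
    match n with
    | 0 => simpa using (show HasDerivAt (He 0) 0 y from hasDerivAt_const y (1:ℝ))
    | 1 => simpa [He_zero] using (show HasDerivAt (He 1) 1 y from hasDerivAt_id y)
    | (m+2) =>
      have h1 : HasDerivAt (He (m+1)) ((m+1 : ℕ) * He m y) y := by
        simpa using ih (m+1) (by omega)
      have h2 : HasDerivAt (He m) ((m : ℕ) * He (m-1) y) y := ih m (by omega)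
      have hy : HasDerivAt (fun y => y * He (m+1) y - (m+1 : ℕ) * He m y)
          ((1 * He (m+1) y + y * ((m+1 : ℕ) * He m y)) - (m+1 : ℕ) * ((m : ℕ) * He (m-1) y)) y := by
        exact ((hasDerivAt_id y).mul h1).sub (h2.const_mul _)
      have heq : (fun y => y * He (m+1) y - (m+1 : ℕ) * He m y) = He (m+2) := by
        funext z; rw [He_succ_succ]
      rw [heq] at hy
      convert hy using 1
      have : He (m+1) y = y * He m y - (m : ℕ) * He (m-1) y := He_rec m y
      show ((m+2 : ℕ) : ℝ) * He (m+1) y = _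
      rw [this]
      push_cast
      ring

/-- `γ_j = C(2j,j)/4^j`. -/
def gam (j : ℕ) : ℝ := ((2*j).choose j : ℝ) / 4 ^ j

lemma gam_zero : gam 0 = 1 := by simp [gam]

lemma gam_pos (j : ℕ) : 0 < gam j := by
  apply div_pos
  · exact_mod_cast Nat.choose_pos (by omega)
  · positivity

lemma gam_nat (j : ℕ) :
    ((2*(j+1)).choose (j+1)) * ((j+1)*(j+1)) = (2*j+2) * ((2*j+1) * ((2*j).choose j)) := by
  have e1 : (2*j+2) * ((2*j+1).choose j) = ((2*j+2).choose (j+1)) * (j+1) := by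
    have := Nat.add_one_mul_choose_eq (2*j+1) j
    simpa [Nat.succ_eq_add_one] using this
  have e2 : (2*j+1) * ((2*j).choose j) = ((2*j+1).choose (j+1)) * (j+1) := by
    have := Nat.add_one_mul_choose_eq (2*j) j
    simpa [Nat.succ_eq_add_one] using this
  have e3 : (2*j+1).choose (j+1) = (2*j+1).choose j := Nat.choose_symm_half j
  have h2 : 2*(j+1) = 2*j+2 := by ring
  rw [h2]
  calc ((2*j+2).choose (j+1)) * ((j+1)*(j+1)) 
      = (((2*j+2).choose (j+1)) * (j+1)) * (j+1) := by ring
    _ = ((2*j+2) * ((2*j+1).choose j)) * (j+1) := by rw [e1]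
    _ = (2*j+2) * (((2*j+1).choose (j+1)) * (j+1)) := by rw [e3]; ring
    _ = (2*j+2) * ((2*j+1) * ((2*j).choose j)) := by rw [e2]

lemma gam_succ (j : ℕ) : (2*(j:ℝ)+2) * gam (j+1) = (2*(j:ℝ)+1) * gam j := by
  have h := gam_nat j
  have hr : (((2*(j+1)).choose (j+1)) : ℝ) * ((j+1)*(j+1)) 
      = (2*(j:ℝ)+2) * ((2*(j:ℝ)+1) * (((2*j).choose j : ℕ) : ℝ)) := by
    exact_mod_cast congrArg (Nat.cast : ℕ → ℝ) h
  unfold gam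
  have hj : ((j:ℝ)+1) ≠ 0 := by positivity
  have h4 : (4:ℝ)^(j+1) = 4 * 4^j := by ring
  set c1 := (((2*(j+1)).choose (j+1)) : ℝ) with hc1
  set c0 := (((2*j).choose j) : ℝ) with hc0
  have h5 : (2*(j:ℝ)+2) * c1 = 4*((2*(j:ℝ)+1)*c0) := by
    have hne : ((j:ℝ)+1)*((j:ℝ)+1) ≠ 0 := by positivity
    apply mul_left_cancel₀ hne
    linear_combination (2*(j:ℝ)+2) * hr
  rw [h4]
  field_simp
  linear_combination h5

lemma gam_conv : ∀ n : ℕ, ∑ j ∈ Finset.range (n+1), gam j * gam (n - j) = 1 := by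
  have key : ∀ n : ℕ, ∑ i ∈ Finset.range (n+1), (2*(i:ℝ)+1) * (gam i * gam (n-i))
      = ((n:ℝ)+1) * ∑ j ∈ Finset.range (n+1), gam j * gam (n - j) := by
    intro n
    have refl : ∑ i ∈ Finset.range (n+1), (2*(i:ℝ)+1) * (gam i * gam (n-i))
        = ∑ i ∈ Finset.range (n+1), (2*((n-i : ℕ):ℝ)+1) * (gam (n-i) * gam (n-(n-i))) := by
      rw [← Finset.sum_range_reflect]
      apply Finset.sum_congr rfl
      intro i hi
      simp only [Finset.mem_range] at hi
      congr 2 <;> omega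
    have sum2 : (∑ i ∈ Finset.range (n+1), (2*(i:ℝ)+1) * (gam i * gam (n-i)))
        + (∑ i ∈ Finset.range (n+1), (2*((n-i : ℕ):ℝ)+1) * (gam i * gam (n-i)))
        = ∑ i ∈ Finset.range (n+1), (2*(n:ℝ)+2) * (gam i * gam (n-i)) := by
      rw [← Finset.sum_add_distrib]
      apply Finset.sum_congr rfl
      intro i hi
      simp only [Finset.mem_range] at hi
      have : ((n-i : ℕ):ℝ) = (n:ℝ) - (i:ℝ) := by
        have : i ≤ n := by omega
        push_cast [this]; ring
      rw [this]; ring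
    have refl2 : ∑ i ∈ Finset.range (n+1), (2*((n-i : ℕ):ℝ)+1) * (gam (n-i) * gam (n-(n-i)))
        = ∑ i ∈ Finset.range (n+1), (2*((n-i : ℕ):ℝ)+1) * (gam i * gam (n-i)) := by
      apply Finset.sum_congr rfl
      intro i hi
      simp only [Finset.mem_range] at hi
      have h1 : n - (n-i) = i := by omega
      rw [h1, mul_comm (gam (n-i)) (gam i)]
    have := sum2
    rw [← refl2, ← refl] at this
    have h2 : ∑ i ∈ Finset.range (n+1), (2*(n:ℝ)+2) * (gam i * gam (n-i))
        = (2*(n:ℝ)+2) * ∑ j ∈ Finset.range (n+1), gam j * gam (n - j) := by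
      rw [Finset.mul_sum]
    rw [h2] at this
    linarith
  intro n
  induction n with
  | zero => simp [gam_zero]
  | succ n ih =>
    have step : ((n:ℝ)+1) * ∑ j ∈ Finset.range (n+2), gam j * gam (n+1-j)
        = ((n:ℝ)+1) * ∑ j ∈ Finset.range (n+1), gam j * gam (n-j) := by
      have lhs1 : ∑ i ∈ Finset.range (n+2), (2*(i:ℝ)) * (gam i * gam (n+1-i))
          = ((n:ℝ)+1) * ∑ j ∈ Finset.range (n+2), gam j * gam (n+1-j) := by
        -- symmetrization over range (n+2)
        have refl : ∑ i ∈ Finset.range (n+2), (2*(i:ℝ)) * (gam i * gam (n+1-i))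
            = ∑ i ∈ Finset.range (n+2), (2*((n+1-i : ℕ):ℝ)) * (gam (n+1-i) * gam (n+1-(n+1-i))) := by
          rw [← Finset.sum_range_reflect]
          apply Finset.sum_congr rfl
          intro i hi
          simp only [Finset.mem_range] at hi
          congr 2 <;> omega
        have refl2 : ∑ i ∈ Finset.range (n+2), (2*((n+1-i : ℕ):ℝ)) * (gam (n+1-i) * gam (n+1-(n+1-i)))
            = ∑ i ∈ Finset.range (n+2), (2*((n+1-i : ℕ):ℝ)) * (gam i * gam (n+1-i)) := by
          apply Finset.sum_congr rfl
          intro i hi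
          simp only [Finset.mem_range] at hi
          have h1 : n+1 - (n+1-i) = i := by omega
          rw [h1, mul_comm (gam (n+1-i)) (gam i)]
        have sum2 : (∑ i ∈ Finset.range (n+2), (2*(i:ℝ)) * (gam i * gam (n+1-i)))
            + (∑ i ∈ Finset.range (n+2), (2*((n+1-i : ℕ):ℝ)) * (gam i * gam (n+1-i)))
            = ∑ i ∈ Finset.range (n+2), (2*(n:ℝ)+2) * (gam i * gam (n+1-i)) := by
          rw [← Finset.sum_add_distrib]
          apply Finset.sum_congr rfl
          intro i hi
          simp only [Finset.mem_range] at hi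
          have : ((n+1-i : ℕ):ℝ) = (n:ℝ) + 1 - (i:ℝ) := by
            have : i ≤ n + 1 := by omega
            push_cast [this]; ring
          rw [this]; ring
        have := sum2
        rw [← refl2, ← refl] at this
        have h2 : ∑ i ∈ Finset.range (n+2), (2*(n:ℝ)+2) * (gam i * gam (n+1-i))
            = (2*(n:ℝ)+2) * ∑ i ∈ Finset.range (n+2), gam i * gam (n+1-i) :=
          (Finset.mul_sum _ _ _).symm
        rw [h2] at this
        linarith
      have lhs2 : ∑ i ∈ Finset.range (n+2), (2*(i:ℝ)) * (gam i * gam (n+1-i))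
          = ∑ i ∈ Finset.range (n+1), (2*(i:ℝ)+1) * (gam i * gam (n-i)) := by
        rw [Finset.sum_range_succ' (fun i => (2*(i:ℝ)) * (gam i * gam (n+1-i))) (n+1)]
        simp only [Nat.cast_zero, mul_zero, zero_mul, add_zero]
        apply Finset.sum_congr rfl
        intro i hi
        simp only [Finset.mem_range] at hi
        have h1 : n + 1 - (i+1) = n - i := by omega
        rw [h1]
        have := gam_succ i
        push_cast
        linear_combination gam (n - i) * this
      rw [← lhs1, lhs2, key n]
    have hpos : ((n:ℝ)+1) ≠ 0 := by positivity
    have := mul_left_cancel₀ hpos step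
    rw [this, ih]

end VLB

namespace VLB

set_option linter.constructorNameAsVariable false

lemma He_odd_zero (i : ℕ) : He (2*i+1) 0 = 0 := by
  induction i with
  | zero => simp [He_one]
  | succ i ih =>
    have h : 2*(i+1)+1 = (2*i+1)+2 := by ring
    rw [h, He_succ_succ]
    rw [ih]
    ring

lemma He_even_zero_sq (i : ℕ) : (He (2*i) 0)^2 = gam i * ((2*i).factorial : ℝ) := by
  induction i with
  | zero => simp [He_zero, gam_zero]
  | succ i ih =>
    have h : 2*(i+1) = (2*i)+2 := by ring
    rw [h, He_succ_succ]
    have h2 : (0:ℝ) * He (2*i+1) 0 - ((2*i+1 : ℕ):ℝ) * He (2*i) 0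
        = -((2*i+1 : ℕ):ℝ) * He (2*i) 0 := by ring
    rw [h2]
    have hsq : (-((2*i+1 : ℕ):ℝ) * He (2*i) 0)^2
        = ((2*i+1 : ℕ):ℝ)^2 * (He (2*i) 0)^2 := by ring
    rw [hsq, ih]
    have hfac : (((2*i)+2).factorial : ℝ) = ((2*i+2 : ℕ):ℝ) * ((2*i+1 : ℕ):ℝ) * ((2*i).factorial : ℝ) := by
      rw [show (2*i)+2 = (2*i+1)+1 by ring, Nat.factorial_succ, Nat.factorial_succ]
      push_cast; ring
    rw [hfac]
    have hg := gam_succ i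
    push_cast at hg ⊢
    linear_combination (-(2*(i:ℝ)+1)) * ((2*i).factorial : ℝ) * hg

/-- The four Hermite-side sums. -/
def Ren (n : ℕ) (y : ℝ) : ℝ :=
  ∑ j ∈ Finset.range (n+1), gam (n-j) * (He (2*j) y)^2 / ((2*j).factorial : ℝ)
def Ron (n : ℕ) (y : ℝ) : ℝ :=
  ∑ j ∈ Finset.range (n+1), gam (n-j) * (He (2*j+1) y)^2 / ((2*j+1).factorial : ℝ)
def Gen (n : ℕ) (y : ℝ) : ℝ :=
  ∑ j ∈ Finset.range (n+1), gam (n-j) * (He (2*j+1) y * He (2*j) y) / ((2*j).factorial : ℝ)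
def Gon (n : ℕ) (y : ℝ) : ℝ :=
  ∑ j ∈ Finset.range (n+1), gam (n-j) * (He (2*j+2) y * He (2*j+1) y) / ((2*j+1).factorial : ℝ)

/-- Laguerre-side sums. -/
def Aen (n : ℕ) (y : ℝ) : ℝ := ∑ k ∈ Finset.range (2*n+1), (-1:ℝ)^k * laguerreFun k (y^2)
def Aon (n : ℕ) (y : ℝ) : ℝ := ∑ k ∈ Finset.range (2*n+2), (-1:ℝ)^k * laguerreFun k (y^2)
def Len (n : ℕ) (x : ℝ) : ℝ := ∑ i ∈ Finset.range (n+1), laguerreFun (2*i) x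
def Lon (n : ℕ) (x : ℝ) : ℝ := ∑ i ∈ Finset.range (n+1), laguerreFun (2*i+1) x

/-- parity splitting of range sums -/
lemma split_both (f : ℕ → ℝ) : ∀ n : ℕ,
    (∑ j ∈ Finset.range (2*n+1), f j = ∑ i ∈ Finset.range (n+1), f (2*i) + ∑ i ∈ Finset.range n, f (2*i+1))
    ∧ (∑ j ∈ Finset.range (2*n+2), f j = ∑ i ∈ Finset.range (n+1), f (2*i) + ∑ i ∈ Finset.range (n+1), f (2*i+1)) := by
  intro n
  induction n with
  | zero => constructor <;> simp [Finset.sum_range_succ]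
  | succ n ih =>
    obtain ⟨h1, h2⟩ := ih
    constructor
    · have e : 2*(n+1)+1 = (2*n+2)+1 := by ring
      rw [e, Finset.sum_range_succ, h2, Finset.sum_range_succ (fun i => f (2*i)) (n+1)]
      have e2 : 2*(n+1) = 2*n+2 := by ring
      rw [e2]; ring
    · have e : 2*(n+1)+2 = ((2*n+2)+1)+1 := by ring
      rw [e, Finset.sum_range_succ, Finset.sum_range_succ, h2,
        Finset.sum_range_succ (fun i => f (2*i)) (n+1),
        Finset.sum_range_succ (fun i => f (2*i+1)) (n+1)]
      have e2 : 2*(n+1) = 2*n+2 := by ring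
      rw [e2]
      simp only [show 2*n+2+1 = 2*n+3 from by ring]
      ring

/-- alternating sums of `dL` -/
lemma lem_dL : ∀ n : ℕ, ∀ x : ℝ,
    (∑ k ∈ Finset.range (2*n+1), (-1:ℝ)^k * dL k x = -∑ i ∈ Finset.range n, laguerreFun (2*i+1) x)
    ∧ (∑ k ∈ Finset.range (2*n+2), (-1:ℝ)^k * dL k x = Len n x) := by
  intro n
  induction n with
  | zero =>
    intro x
    constructor
    · simp [dL]
    · rw [show 2*0+2 = 2 by norm_num]
      rw [Finset.sum_range_succ, Finset.sum_range_succ]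
      simp [dL, Len, laguerreFun]
  | succ n ih =>
    intro x
    obtain ⟨h1, h2⟩ := ih x
    have hsplit := split_both (fun j => laguerreFun j x)
    constructor
    · have e : 2*(n+1)+1 = (2*n+2)+1 := by ring
      rw [e, Finset.sum_range_succ, h2]
      have hdl : dL (2*n+2) x = -∑ j ∈ Finset.range (2*n+2), laguerreFun j x := rfl
      rw [(hsplit (n)).2] at hdl
      have he : (-1:ℝ)^(2*n+2) = 1 := by
        rw [show 2*n+2 = 2*(n+1) by ring, pow_mul]; norm_num
      rw [he, hdl]
      unfold Len
      ring
    · have e : 2*(n+1)+2 = ((2*n+2)+1)+1 := by ring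
      rw [e, Finset.sum_range_succ]
      have h1' : ∑ k ∈ Finset.range ((2*n+2)+1), (-1:ℝ)^k * dL k x
          = -∑ i ∈ Finset.range (n+1), laguerreFun (2*i+1) x := by
        have e2 : (2*n+2)+1 = 2*(n+1)+1 := by ring
        rw [e2]
        -- this is exactly the first part we just proved; reprove inline
        rw [show 2*(n+1)+1 = (2*n+2)+1 by ring, Finset.sum_range_succ, h2]
        have hdl : dL (2*n+2) x = -∑ j ∈ Finset.range (2*n+2), laguerreFun j x := rfl
        rw [(hsplit n).2] at hdl
        have he : (-1:ℝ)^(2*n+2) = 1 := by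
          rw [show 2*n+2 = 2*(n+1) by ring, pow_mul]; norm_num
        rw [he, hdl]
        unfold Len
        ring
      rw [h1']
      have hdl : dL (2*n+3) x = -∑ j ∈ Finset.range (2*n+3), laguerreFun j x := rfl
      rw [show (2*n+3) = 2*(n+1)+1 from by ring, (hsplit (n+1)).1] at hdl
      rw [show 2*(n+1)+1 = 2*n+3 from by ring] at hdl
      have he : (-1:ℝ)^((2*n+2)+1) = -1 := by
        rw [pow_succ, show 2*n+2 = 2*(n+1) by ring, pow_mul]; norm_num
      rw [he, hdl]
      unfold Len
      have e5 : 2*(n+1) = 2*n+2 := by ring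
      ring

end VLB

namespace VLB

lemma fac_ne (k : ℕ) : ((k.factorial : ℕ) : ℝ) ≠ 0 := by
  exact_mod_cast (Nat.factorial_pos k).ne'

/-- `g_{k+1} + g_k = y e_{k+1}` -/
lemma he_cross (k : ℕ) (y : ℝ) :
    He (k+2) y * He (k+1) y / ((k+1).factorial : ℝ)
      + He (k+1) y * He k y / (k.factorial : ℝ)
    = y * (He (k+1) y)^2 / ((k+1).factorial : ℝ) := by
  rw [He_succ_succ]
  have hfac : (((k+1).factorial : ℕ) : ℝ) = ((k+1 : ℕ) : ℝ) * (k.factorial : ℝ) := by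
    rw [Nat.factorial_succ]; push_cast; ring
  rw [hfac]
  have h1 : ((k:ℝ)+1) ≠ 0 := by positivity
  field_simp
  push_cast
  ring

/-- (a-odd): `Gon n + Gen n = y · Ron n` -/
lemma a_odd (n : ℕ) (y : ℝ) : Gon n y + Gen n y = y * Ron n y := by
  unfold Gon Gen Ron
  rw [← Finset.sum_add_distrib, Finset.mul_sum]
  apply Finset.sum_congr rfl
  intro j _
  have := he_cross (2*j) y
  have e : 2*j+2 = (2*j)+2 := by ring
  calc gam (n-j) * (He (2*j+2) y * He (2*j+1) y) / ((2*j+1).factorial : ℝ)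
      + gam (n-j) * (He (2*j+1) y * He (2*j) y) / ((2*j).factorial : ℝ)
      = gam (n-j) * (He ((2*j)+2) y * He ((2*j)+1) y / (((2*j)+1).factorial : ℝ)
        + He ((2*j)+1) y * He (2*j) y / ((2*j).factorial : ℝ)) := by ring
    _ = gam (n-j) * (y * (He (2*j+1) y)^2 / ((2*j+1).factorial : ℝ)) := by rw [he_cross (2*j) y]
    _ = y * (gam (n-j) * (He (2*j+1) y)^2 / ((2*j+1).factorial : ℝ)) := by ring

/-- (a-even): `Gen (n+1) + Gon n = y · Ren (n+1)` -/
lemma a_even (n : ℕ) (y : ℝ) : Gen (n+1) y + Gon n y = y * Ren (n+1) y := by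
  unfold Gen Gon Ren
  rw [Finset.mul_sum]
  rw [Finset.sum_range_succ' (fun j => gam (n+1-j) * (He (2*j+1) y * He (2*j) y) / ((2*j).factorial : ℝ)) (n+1)]
  rw [Finset.sum_range_succ' (fun j => y * (gam (n+1-j) * (He (2*j) y)^2 / ((2*j).factorial : ℝ))) (n+1)]
  have h0 : gam (n+1-0) * (He (2*0+1) y * He (2*0) y) / ((2*0).factorial : ℝ)
      = y * (gam (n+1-0) * (He (2*0) y)^2 / ((2*0).factorial : ℝ)) := by
    simp [He_one, He_zero]
    ring
  rw [h0]
  rw [add_right_comm, ← Finset.sum_add_distrib]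
  congr 1
  apply Finset.sum_congr rfl
  intro j _
  have e1 : n+1-(j+1) = n-j := by omega
  have e2 : 2*(j+1) = (2*j+1)+1 := by ring
  rw [e1, e2]
  simp only [show 2*j+1+1+1 = 2*j+1+2 from by omega, show 2*j+2 = 2*j+1+1 from by omega]
  calc gam (n-j) * (He (2*j+1+2) y * He (2*j+1+1) y) / ((2*j+1+1).factorial : ℝ)
      + gam (n-j) * (He (2*j+1+1) y * He (2*j+1) y) / ((2*j+1).factorial : ℝ)
      = gam (n-j) * (He ((2*j+1)+2) y * He ((2*j+1)+1) y / (((2*j+1)+1).factorial : ℝ)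
        + He ((2*j+1)+1) y * He (2*j+1) y / ((2*j+1).factorial : ℝ)) := by
        ring
    _ = gam (n-j) * (y * (He ((2*j+1)+1) y)^2 / (((2*j+1)+1).factorial : ℝ)) := by
        rw [he_cross (2*j+1) y]
    _ = y * (gam (n-j) * (He ((2*j+1)+1) y)^2 / (((2*j+1)+1).factorial : ℝ)) := by ring

/-- derivative of Ron -/
lemma hasDerivAt_Ron (n : ℕ) (y : ℝ) : HasDerivAt (Ron n) (2 * Gen n y) y := by
  have h : HasDerivAt (Ron n)
      (∑ j ∈ Finset.range (n+1), gam (n-j) * (2 * He (2*j+1) y * (((2*j+1 : ℕ):ℝ) * He (2*j) y)) / ((2*j+1).factorial : ℝ)) y := by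
    unfold Ron
    apply HasDerivAt.fun_sum
    intro j _
    have hhe : HasDerivAt (He (2*j+1)) (((2*j+1 : ℕ):ℝ) * He (2*j) y) y := by
      have := hasDerivAt_He (2*j+1) y
      simpa using this
    have hsq : HasDerivAt (fun y => (He (2*j+1) y)^2)
        (2 * He (2*j+1) y * (((2*j+1 : ℕ):ℝ) * He (2*j) y)) y := by
      have := hhe.fun_pow 2
      simpa [mul_comm, mul_assoc, mul_left_comm] using this
    have := (hsq.const_mul (gam (n-j))).div_const ((2*j+1).factorial : ℝ)
    simpa [mul_assoc] using this
  convert h using 1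
  unfold Gen
  rw [Finset.mul_sum]
  apply Finset.sum_congr rfl
  intro j _
  have hfac : (((2*j+1).factorial : ℕ) : ℝ) = ((2*j+1 : ℕ) : ℝ) * ((2*j).factorial : ℝ) := by
    rw [Nat.factorial_succ]; push_cast; ring
  rw [hfac]
  have h1 : ((2*j+1 : ℕ):ℝ) ≠ 0 := by positivity
  field_simp

/-- derivative of Ren (n+1) -/
lemma hasDerivAt_Ren_succ (n : ℕ) (y : ℝ) : HasDerivAt (Ren (n+1)) (2 * Gon n y) y := by
  have h : HasDerivAt (Ren (n+1))
      (∑ j ∈ Finset.range (n+2), gam (n+1-j) * (2 * He (2*j) y * (((2*j : ℕ):ℝ) * He (2*j-1) y)) / ((2*j).factorial : ℝ)) y := by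
    unfold Ren
    apply HasDerivAt.fun_sum
    intro j _
    have hhe : HasDerivAt (He (2*j)) (((2*j : ℕ):ℝ) * He (2*j-1) y) y := hasDerivAt_He (2*j) y
    have hsq : HasDerivAt (fun y => (He (2*j) y)^2)
        (2 * He (2*j) y * (((2*j : ℕ):ℝ) * He (2*j-1) y)) y := by
      have := hhe.fun_pow 2
      simpa [mul_comm, mul_assoc, mul_left_comm] using this
    have := (hsq.const_mul (gam (n+1-j))).div_const ((2*j).factorial : ℝ)
    simpa [mul_assoc] using this
  convert h using 1
  rw [Finset.sum_range_succ' (fun j => gam (n+1-j) * (2 * He (2*j) y * (((2*j : ℕ):ℝ) * He (2*j-1) y)) / ((2*j).factorial : ℝ)) (n+1)]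
  simp only [Nat.mul_zero, Nat.cast_zero, zero_mul, mul_zero, zero_div, add_zero]
  unfold Gon
  rw [Finset.mul_sum]
  apply Finset.sum_congr rfl
  intro j _
  have e1 : n+1-(j+1) = n-j := by omega
  have e2 : 2*(j+1) = (2*j+1)+1 := by ring
  rw [e1, e2]
  simp only [Nat.add_sub_cancel]
  have hfac : ((((2*j+1)+1).factorial : ℕ) : ℝ) = (((2*j+1)+1 : ℕ) : ℝ) * ((2*j+1).factorial : ℝ) := by
    rw [Nat.factorial_succ]; push_cast; ring
  rw [hfac]
  have h1 : (((2*j+1)+1 : ℕ):ℝ) ≠ 0 := by positivity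
  have e5 : (2*j+2) = (2*j+1)+1 := by ring
  rw [e5]
  field_simp

lemma hasDerivAt_Ren_zero (y : ℝ) : HasDerivAt (Ren 0) 0 y := by
  have h : Ren 0 = fun _ : ℝ => gam 0 * 1 / ((0 : ℕ).factorial : ℝ) := by
    funext z
    unfold Ren
    simp [He_zero]
  rw [h]
  exact hasDerivAt_const y _

end VLB

namespace VLB

lemma hasDerivAt_lag_sq (k : ℕ) (y : ℝ) :
    HasDerivAt (fun y : ℝ => laguerreFun k (y^2)) (dL k (y^2) * (2*y)) y := by
  have hy : HasDerivAt (fun y : ℝ => y^2) (2*y) y := by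
    simpa using hasDerivAt_pow 2 y
  exact (hasDerivAt_laguerre k (y^2)).comp y hy

lemma hasDerivAt_Aon (n : ℕ) (y : ℝ) : HasDerivAt (Aon n) (2 * y * Len n (y^2)) y := by
  have h : HasDerivAt (Aon n)
      (∑ k ∈ Finset.range (2*n+2), (-1:ℝ)^k * (dL k (y^2) * (2*y))) y := by
    unfold Aon
    apply HasDerivAt.fun_sum
    intro k _
    exact (hasDerivAt_lag_sq k y).const_mul _
  convert h using 1
  have := (lem_dL n (y^2)).2
  calc 2 * y * Len n (y^2) = (∑ k ∈ Finset.range (2*n+2), (-1:ℝ)^k * dL k (y^2)) * (2*y) := by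
        rw [this]; ring
    _ = ∑ k ∈ Finset.range (2*n+2), (-1:ℝ)^k * (dL k (y^2) * (2*y)) := by
        rw [Finset.sum_mul]; apply Finset.sum_congr rfl; intro k _; ring

lemma hasDerivAt_Aen (n : ℕ) (y : ℝ) :
    HasDerivAt (Aen (n+1)) (-(2 * y * Lon n (y^2))) y := by
  have h : HasDerivAt (Aen (n+1))
      (∑ k ∈ Finset.range (2*(n+1)+1), (-1:ℝ)^k * (dL k (y^2) * (2*y))) y := by
    unfold Aen
    apply HasDerivAt.fun_sum
    intro k _
    exact (hasDerivAt_lag_sq k y).const_mul _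
  convert h using 1
  have h1 := (lem_dL (n+1) (y^2)).1
  calc -(2 * y * Lon n (y^2)) = (-∑ i ∈ Finset.range (n+1), laguerreFun (2*i+1) (y^2)) * (2*y) := by
        unfold Lon; ring
    _ = (∑ k ∈ Finset.range (2*(n+1)+1), (-1:ℝ)^k * dL k (y^2)) * (2*y) := by rw [h1]
    _ = ∑ k ∈ Finset.range (2*(n+1)+1), (-1:ℝ)^k * (dL k (y^2) * (2*y)) := by
        rw [Finset.sum_mul]; apply Finset.sum_congr rfl; intro k _; ring

lemma Ren_zero_val (n : ℕ) : Ren n 0 = 1 := by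
  unfold Ren
  have h : ∀ j ∈ Finset.range (n+1),
      gam (n-j) * (He (2*j) 0)^2 / ((2*j).factorial : ℝ) = gam j * gam (n-j) := by
    intro j _
    rw [He_even_zero_sq j]
    have := fac_ne (2*j)
    field_simp
  rw [Finset.sum_congr rfl h]
  exact gam_conv n

lemma Ron_zero_val (n : ℕ) : Ron n 0 = 0 := by
  unfold Ron
  apply Finset.sum_eq_zero
  intro j _
  rw [He_odd_zero j]
  simp

lemma Aen_zero_val (n : ℕ) : Aen n 0 = 1 := by
  unfold Aen
  have h : ∀ k ∈ Finset.range (2*n+1), (-1:ℝ)^k * laguerreFun k ((0:ℝ)^2) = (-1:ℝ)^k := by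
    intro k _
    rw [show ((0:ℝ)^2) = 0 by norm_num, laguerre_zero, mul_one]
  rw [Finset.sum_congr rfl h, neg_one_geom_sum]
  rw [if_neg]
  simp [Nat.even_add_one, parity_simps]

lemma Aon_zero_val (n : ℕ) : Aon n 0 = 0 := by
  unfold Aon
  have h : ∀ k ∈ Finset.range (2*n+2), (-1:ℝ)^k * laguerreFun k ((0:ℝ)^2) = (-1:ℝ)^k := by
    intro k _
    rw [show ((0:ℝ)^2) = 0 by norm_num, laguerre_zero, mul_one]
  rw [Finset.sum_congr rfl h, neg_one_geom_sum]
  rw [if_pos]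
  exact ⟨n+1, by ring⟩

lemma eq_of_deriv_eq {f g F : ℝ → ℝ} (hf : ∀ y, HasDerivAt f (F y) y)
    (hg : ∀ y, HasDerivAt g (F y) y) (h0 : f 0 = g 0) : ∀ y, f y = g y := by
  intro y
  have hd : Differentiable ℝ (fun t => f t - g t) :=
    fun t => ((hf t).differentiableAt).sub ((hg t).differentiableAt)
  have hz : ∀ t, deriv (fun t => f t - g t) t = 0 := by
    intro t
    rw [((hf t).fun_sub (hg t)).deriv]
    ring
  have := is_const_of_deriv_eq_zero hd hz y 0
  have h2 : f y - g y = f 0 - g 0 := this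
  rw [h0] at h2
  linarith [h2]

/-- splits of Aen/Aon into even/odd Laguerre sums -/
lemma Aen_split (n : ℕ) (y : ℝ) :
    Aen (n+1) y = Len (n+1) (y^2) - Lon n (y^2) := by
  unfold Aen Len Lon
  have h := (split_both (fun k => (-1:ℝ)^k * laguerreFun k (y^2)) (n+1)).1
  rw [h]
  have h1 : ∀ i ∈ Finset.range (n+2), (-1:ℝ)^(2*i) * laguerreFun (2*i) (y^2) = laguerreFun (2*i) (y^2) := by
    intro i _
    rw [pow_mul]; norm_num
  have h2 : ∀ i ∈ Finset.range (n+1), (-1:ℝ)^(2*i+1) * laguerreFun (2*i+1) (y^2) = -laguerreFun (2*i+1) (y^2) := by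
    intro i _
    rw [pow_succ, pow_mul]; norm_num
  rw [Finset.sum_congr rfl h1, Finset.sum_congr rfl h2]
  rw [Finset.sum_neg_distrib]
  ring

lemma Aon_split (n : ℕ) (y : ℝ) :
    Aon n y = Len n (y^2) - Lon n (y^2) := by
  unfold Aon Len Lon
  have h := (split_both (fun k => (-1:ℝ)^k * laguerreFun k (y^2)) n).2
  rw [h]
  have h1 : ∀ i ∈ Finset.range (n+1), (-1:ℝ)^(2*i) * laguerreFun (2*i) (y^2) = laguerreFun (2*i) (y^2) := by
    intro i _
    rw [pow_mul]; norm_num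
  have h2 : ∀ i ∈ Finset.range (n+1), (-1:ℝ)^(2*i+1) * laguerreFun (2*i+1) (y^2) = -laguerreFun (2*i+1) (y^2) := by
    intro i _
    rw [pow_succ, pow_mul]; norm_num
  rw [Finset.sum_congr rfl h1, Finset.sum_congr rfl h2]
  rw [Finset.sum_neg_distrib]
  ring

/-- THE MAIN IDENTITY -/
theorem main_identity : ∀ n : ℕ,
    (∀ y : ℝ, Ren n y = Aen n y) ∧ (∀ y : ℝ, Gen n y = y * Len n (y^2))
    ∧ (∀ y : ℝ, Ron n y = Aon n y) ∧ (∀ y : ℝ, Gon n y = -(y * Lon n (y^2))) := by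
  intro n
  induction n with
  | zero =>
    have hRe : ∀ y : ℝ, Ren 0 y = Aen 0 y := by
      intro y
      unfold Ren Aen
      simp [He_zero, gam_zero, laguerreFun]
    have hGe : ∀ y : ℝ, Gen 0 y = y * Len 0 (y^2) := by
      intro y
      unfold Gen Len
      simp [He_zero, He_one, gam_zero, laguerreFun]
    have hRo : ∀ y : ℝ, Ron 0 y = Aon 0 y := by
      apply eq_of_deriv_eq (F := fun y => 2 * y * Len 0 (y^2))
      · intro y
        have := hasDerivAt_Ron 0 y
        have h2 : 2 * Gen 0 y = 2 * y * Len 0 (y^2) := by rw [hGe y]; ring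
        rwa [h2] at this
      · intro y; exact hasDerivAt_Aon 0 y
      · rw [Ron_zero_val, Aon_zero_val]
    have hGo : ∀ y : ℝ, Gon 0 y = -(y * Lon 0 (y^2)) := by
      intro y
      have ha := a_odd 0 y
      rw [hRo y, Aon_split 0 y, hGe y] at ha
      linarith [ha]
    exact ⟨hRe, hGe, hRo, hGo⟩
  | succ n ih =>
    obtain ⟨ihRe, ihGe, ihRo, ihGo⟩ := ih
    have hRe : ∀ y : ℝ, Ren (n+1) y = Aen (n+1) y := by
      apply eq_of_deriv_eq (F := fun y => -(2 * y * Lon n (y^2)))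
      · intro y
        have := hasDerivAt_Ren_succ n y
        have h2 : 2 * Gon n y = -(2 * y * Lon n (y^2)) := by rw [ihGo y]; ring
        rwa [h2] at this
      · intro y; exact hasDerivAt_Aen n y
      · rw [Ren_zero_val, Aen_zero_val]
    have hGe : ∀ y : ℝ, Gen (n+1) y = y * Len (n+1) (y^2) := by
      intro y
      have ha := a_even n y
      rw [hRe y, Aen_split n y, ihGo y] at ha
      linarith [ha]
    have hRo : ∀ y : ℝ, Ron (n+1) y = Aon (n+1) y := by
      apply eq_of_deriv_eq (F := fun y => 2 * y * Len (n+1) (y^2))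
      · intro y
        have := hasDerivAt_Ron (n+1) y
        have h2 : 2 * Gen (n+1) y = 2 * y * Len (n+1) (y^2) := by rw [hGe y]; ring
        rwa [h2] at this
      · intro y; exact hasDerivAt_Aon (n+1) y
      · rw [Ron_zero_val, Aon_zero_val]
    have hGo : ∀ y : ℝ, Gon (n+1) y = -(y * Lon (n+1) (y^2)) := by
      intro y
      have ha := a_odd (n+1) y
      rw [hRo y, Aon_split (n+1) y, hGe y] at ha
      linarith [ha]
    exact ⟨hRe, hGe, hRo, hGo⟩

end VLB

namespace VLB

lemma Ren_nonneg (n : ℕ) (y : ℝ) : 0 ≤ Ren n y := by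
  unfold Ren
  apply Finset.sum_nonneg
  intro j _
  have h1 := (gam_pos (n-j)).le
  have h2 : (0:ℝ) ≤ (He (2*j) y)^2 := sq_nonneg _
  have h3 : (0:ℝ) < ((2*j).factorial : ℝ) := by exact_mod_cast Nat.factorial_pos (2*j)
  positivity

lemma Ron_nonneg (n : ℕ) (y : ℝ) : 0 ≤ Ron n y := by
  unfold Ron
  apply Finset.sum_nonneg
  intro j _
  have h1 := (gam_pos (n-j)).le
  have h3 : (0:ℝ) < ((2*j+1).factorial : ℝ) := by exact_mod_cast Nat.factorial_pos (2*j+1)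
  positivity

lemma Sn_nonneg (n : ℕ) (x : ℝ) (hx : 0 ≤ x) : 0 ≤ Sn n x := by
  rcases n with - | m
  · simp [Sn]
  set y := Real.sqrt x with hy
  have hyy : y^2 = x := Real.sq_sqrt hx
  rcases Nat.even_or_odd m with ⟨a, ha⟩ | ⟨a, ha⟩
  · -- n = 2a+1 : Sn n x = Aen a y
    have he : Sn (m+1) x = Aen a y := by
      have hm : m + 1 = 2*a+1 := by omega
      unfold Sn Aen
      rw [hyy, hm]
    rw [he, ← (main_identity a).1 y]
    exact Ren_nonneg a y
  · -- n = 2a+2 : Sn n x = Aon a y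
    have he : Sn (m+1) x = Aon a y := by
      have hm : m + 1 = 2*a+2 := by omega
      unfold Sn Aon
      rw [hyy, hm]
    rw [he, ← (main_identity a).2.2.1 y]
    exact Ron_nonneg a y

lemma Tfun_ge_half (n : ℕ) (X : ℝ) (hX : 0 ≤ X) : 1/2 ≤ Tfun n X :=
  Tfun_ge_of_Sn_nonneg n (fun x hx => Sn_nonneg n x hx) X hX

end VLB

theorem V_lower_bound (d : ℕ) (hd : 1 ≤ d) (α : Fin d → ℕ) :
    (∀ X : ℝ, 0 ≤ X → (2 : ℝ) ^ d * Real.exp (-X / 2) ≤ Vfun d α X) ∧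
      Vfun d α 0 = (2 : ℝ) ^ d := by
  obtain ⟨e, rfl⟩ : ∃ e : ℕ, d = e + 1 := ⟨d - 1, by omega⟩
  have hsum : ∑ k ∈ Finset.range (e+1), (((e+1) - 1).choose k : ℝ) = 2 ^ e := by
    have : ∑ k ∈ Finset.range (e+1), ((e+1) - 1).choose k = 2 ^ e := by
      simpa using Nat.sum_range_choose e
    exact_mod_cast this
  constructor
  · intro X hX
    unfold Vfun
    have hle : (2:ℝ)^e / 2 ≤ ∑ k ∈ Finset.range (e+1), (((e+1) - 1).choose k : ℝ) * Tfun ((∑ j, α j) + k) X := by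
      have h1 : ∀ k ∈ Finset.range (e+1),
          (((e+1) - 1).choose k : ℝ) * (1/2 : ℝ) ≤ (((e+1) - 1).choose k : ℝ) * Tfun ((∑ j, α j) + k) X := by
        intro k _
        apply mul_le_mul_of_nonneg_left (VLB.Tfun_ge_half _ X hX)
        positivity
      have h2 := Finset.sum_le_sum h1
      rw [← Finset.sum_mul, hsum] at h2
      linarith [h2]
    have hexp : (0:ℝ) < Real.exp (-X/2) := Real.exp_pos _
    calc (2:ℝ)^(e+1) * Real.exp (-X/2) = 4 * Real.exp (-X/2) * ((2:ℝ)^e / 2) := by ring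
      _ ≤ 4 * Real.exp (-X/2) * ∑ k ∈ Finset.range (e+1), (((e+1) - 1).choose k : ℝ) * Tfun ((∑ j, α j) + k) X := by
          apply mul_le_mul_of_nonneg_left _ (by positivity)
          linarith [hle]
  · unfold Vfun
    have h0 : ∀ k ∈ Finset.range (e+1),
        (((e+1) - 1).choose k : ℝ) * Tfun ((∑ j, α j) + k) 0 = (((e+1) - 1).choose k : ℝ) * (1/2) := by
      intro k _
      rw [VLB.Tfun_zero]
    rw [Finset.sum_congr rfl h0, ← Finset.sum_mul, hsum]
    simp [Real.exp_zero]
    ring
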